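/- Let g : [-π,π] → ℂ be continuously differentiable. Then (1/√n) Σ_{j=-n+1}^{n} g(ω_j) − (√n/π) ∫_{-π}^{π} g(ω) dω → 0 as n → ∞, where ω_j = πj/n. -/

import Mathlib

open Real Filter Finset

theorem stmt_5 (g g' : ℝ → ℂ)
    (hderiv : ∀ ω ∈ Set.Icc (-Real.pi) Real.pi, HasDerivAt g (g' ω) ω)
    (hcont : ContinuousOn g' (Set.Icc (-Real.pi) Real.pi)) :
    Filter.Tendsto (fun n : ℕ =>
        (1 / ((Real.sqrt n : ℝ) : ℂ)) *
            (∑ j ∈ Finset.Icc (-(n : ℤ) + 1) (n : ℤ), g (Real.pi * j / n)) -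
          (((Real.sqrt n : ℝ) : ℂ) / (Real.pi : ℂ)) * ∫ ω in (-Real.pi)..Real.pi, g ω)
      Filter.atTop (nhds 0) := by
  have pi_pos := Real.pi_pos
  have hgc : ContinuousOn g (Set.Icc (-Real.pi) Real.pi) := fun x hx =>
    (hderiv x hx).continuousAt.continuousWithinAt
  obtain ⟨M, hM⟩ := isCompact_Icc.exists_bound_of_continuousOn hcont
  have hM0 : 0 ≤ M := le_trans (norm_nonneg (g' 0)) (hM 0 (by constructor <;> linarith))
  have hlip : ∀ x ∈ Set.Icc (-Real.pi) Real.pi, ∀ y ∈ Set.Icc (-Real.pi) Real.pi,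
      ‖g y - g x‖ ≤ M * |y - x| := by
    intro x hx y hy
    simpa using Convex.norm_image_sub_le_of_norm_hasDerivWithin_le
      (fun z hz => (hderiv z hz).hasDerivWithinAt) hM (convex_Icc _ _) hx hy
  have key : ∀ n : ℕ, 1 ≤ n →
      ‖(1 / ((Real.sqrt n : ℝ) : ℂ)) *
            (∑ j ∈ Finset.Icc (-(n : ℤ) + 1) (n : ℤ), g (Real.pi * j / n)) -
          (((Real.sqrt n : ℝ) : ℂ) / (Real.pi : ℂ)) * ∫ ω in (-Real.pi)..Real.pi, g ω‖
        ≤ 2 * Real.pi * M / Real.sqrt n := by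
    intro n hn
    have hn0 : (0:ℝ) < n := by exact_mod_cast hn
    have hs0 : (0:ℝ) < Real.sqrt n := Real.sqrt_pos.2 hn0
    have hss : Real.sqrt n * Real.sqrt n = n := Real.mul_self_sqrt hn0.le
    set a : ℕ → ℝ := fun k => -Real.pi + Real.pi * k / n with ha
    have hstep : ∀ k : ℕ, a (k+1) - a k = Real.pi / n := by
      intro k
      simp only [ha]
      push_cast
      field_simp
      ring
    have ha0 : a 0 = -Real.pi := by simp [ha]
    have ha2n : a (2 * n) = Real.pi := by
      simp only [ha]
      push_cast
      field_simp
      ring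
    have haeq : ∀ k : ℕ, Real.pi * ((((k:ℤ) - n + 1 : ℤ)):ℝ) / n = a (k+1) := by
      intro k
      simp only [ha]
      push_cast
      field_simp
      ring
    have ha_mem : ∀ k ≤ 2 * n, a k ∈ Set.Icc (-Real.pi) Real.pi := by
      intro k hk
      have h1 : (0:ℝ) ≤ Real.pi * k / n := by positivity
      have h2 : Real.pi * k / n ≤ 2 * Real.pi := by
        rw [div_le_iff₀ hn0]
        have : (k:ℝ) ≤ 2 * n := by exact_mod_cast hk
        nlinarith
      constructor
      · simp only [ha]; linarith
      · simp only [ha]; linarith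
    clear ha
    clear_value a
    have ha_mono : ∀ k : ℕ, a k ≤ a (k+1) := by
      intro k
      have h2 : (0:ℝ) < Real.pi / n := by positivity
      linarith [hstep k]
    have hsub : ∀ k < 2 * n, Set.uIcc (a k) (a (k+1)) ⊆ Set.Icc (-Real.pi) Real.pi := by
      intro k hk
      rw [Set.uIcc_of_le (ha_mono k)]
      exact Set.Icc_subset_Icc (ha_mem k (by omega)).1 (ha_mem (k+1) (by omega)).2
    have hint : ∀ k < 2 * n, IntervalIntegrable g MeasureTheory.volume (a k) (a (k+1)) :=
      fun k hk => (hgc.mono (hsub k hk)).intervalIntegrable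
    have hsplit : (∫ ω in (-Real.pi)..Real.pi, g ω)
        = ∑ k ∈ Finset.range (2 * n), ∫ ω in a k..a (k+1), g ω := by
      rw [intervalIntegral.sum_integral_adjacent_intervals hint, ha0, ha2n]
    have hinj : Function.Injective (fun k : ℕ => (k:ℤ) - n + 1) := by
      intro x y h
      simp only at h
      omega
    have hmap : Finset.Icc (-(n:ℤ) + 1) (n:ℤ)
        = Finset.map ⟨fun k : ℕ => (k:ℤ) - n + 1, hinj⟩
            (Finset.range (2 * n)) := by
      ext j
      simp only [Finset.mem_Icc, Finset.mem_map, Finset.mem_range, Function.Embedding.coeFn_mk]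
      constructor
      · rintro ⟨h1, h2⟩
        exact ⟨(j + n - 1).toNat, by omega, by omega⟩
      · rintro ⟨k, hk, rfl⟩
        omega
    have hsum : (∑ j ∈ Finset.Icc (-(n:ℤ) + 1) (n:ℤ), g (Real.pi * j / n))
        = ∑ k ∈ Finset.range (2 * n), g (a (k+1)) := by
      rw [hmap, Finset.sum_map]
      exact Finset.sum_congr rfl fun k _ => by rw [Function.Embedding.coeFn_mk, haeq]
    have hcoef : (1 / ((Real.sqrt n : ℝ) : ℂ))
        = ((Real.sqrt n : ℝ) : ℂ) / (Real.pi : ℂ) * ((Real.pi / n : ℝ) : ℂ) := by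
      have hr : (1 : ℝ) / Real.sqrt n = Real.sqrt n / Real.pi * (Real.pi / n) := by
        field_simp
        exact (Real.sq_sqrt hn0.le).symm
      push_cast
      exact_mod_cast congrArg (fun x : ℝ => (x : ℂ)) hr
    have hrw : (1 / ((Real.sqrt n : ℝ) : ℂ)) *
            (∑ j ∈ Finset.Icc (-(n : ℤ) + 1) (n : ℤ), g (Real.pi * j / n)) -
          (((Real.sqrt n : ℝ) : ℂ) / (Real.pi : ℂ)) * ∫ ω in (-Real.pi)..Real.pi, g ω
        = ((Real.sqrt n : ℝ) : ℂ) / (Real.pi : ℂ) *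
            ∑ k ∈ Finset.range (2 * n),
              (((Real.pi / n : ℝ) : ℂ) * g (a (k+1)) - ∫ ω in a k..a (k+1), g ω) := by
      rw [hsum, hsplit, hcoef, Finset.sum_sub_distrib, Finset.mul_sum, Finset.mul_sum,
        mul_sub, Finset.mul_sum, Finset.mul_sum]
      congr 1
      exact Finset.sum_congr rfl fun k _ => by ring
    have hE : ∀ k < 2 * n,
        ‖((Real.pi / n : ℝ) : ℂ) * g (a (k+1)) - ∫ ω in a k..a (k+1), g ω‖
          ≤ M * (Real.pi / n) * (Real.pi / n) := by
      intro k hk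
      have hconst : ((Real.pi / n : ℝ) : ℂ) * g (a (k+1))
          = ∫ _ in a k..a (k+1), g (a (k+1)) := by
        rw [intervalIntegral.integral_const, ← hstep k]
        rw [Complex.real_smul]
      rw [hconst, ← intervalIntegral.integral_sub intervalIntegrable_const (hint k hk)]
      have hb : ∀ x ∈ Set.uIoc (a k) (a (k+1)), ‖g (a (k+1)) - g x‖ ≤ M * (Real.pi / n) := by
        intro x hx
        have hx' : x ∈ Set.Icc (a k) (a (k+1)) :=
          Set.Ioc_subset_Icc_self ((Set.uIoc_of_le (ha_mono k)) ▸ hx)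
        have hxI : x ∈ Set.Icc (-Real.pi) Real.pi := hsub k hk (by
          rw [Set.uIcc_of_le (ha_mono k)]
          exact hx')
        have hk1 : a (k+1) ∈ Set.Icc (-Real.pi) Real.pi := ha_mem (k+1) (by omega)
        calc ‖g (a (k+1)) - g x‖ ≤ M * |a (k+1) - x| := hlip x hxI (a (k+1)) hk1
          _ ≤ M * (Real.pi / n) := by
              apply mul_le_mul_of_nonneg_left _ hM0
              rw [abs_of_nonneg (by linarith [hx'.2])]
              linarith [hx'.1, hstep k]
      calc ‖∫ ω in a k..a (k+1), (g (a (k+1)) - g ω)‖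
          ≤ M * (Real.pi / n) * |a (k+1) - a k| :=
            intervalIntegral.norm_integral_le_of_norm_le_const hb
        _ = M * (Real.pi / n) * (Real.pi / n) := by
            rw [hstep k, abs_of_pos (by positivity)]
    rw [hrw]
    have hnorm_coef : ‖((Real.sqrt n : ℝ) : ℂ) / (Real.pi : ℂ)‖ = Real.sqrt n / Real.pi := by
      rw [norm_div]
      simp [abs_of_nonneg, Real.sqrt_nonneg, pi_pos.le]
    rw [norm_mul, hnorm_coef]
    have hsum_bound : ‖∑ k ∈ Finset.range (2 * n),
        (((Real.pi / n : ℝ) : ℂ) * g (a (k+1)) - ∫ ω in a k..a (k+1), g ω)‖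
          ≤ 2 * n * (M * (Real.pi / n) * (Real.pi / n)) := by
      calc ‖∑ k ∈ Finset.range (2 * n), _‖
          ≤ ∑ k ∈ Finset.range (2 * n),
              ‖((Real.pi / n : ℝ) : ℂ) * g (a (k+1)) - ∫ ω in a k..a (k+1), g ω‖ :=
            norm_sum_le _ _
        _ ≤ ∑ k ∈ Finset.range (2 * n), (M * (Real.pi / n) * (Real.pi / n)) :=
            Finset.sum_le_sum fun k hk => hE k (Finset.mem_range.1 hk)
        _ = 2 * n * (M * (Real.pi / n) * (Real.pi / n)) := by
            rw [Finset.sum_const, Finset.card_range]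
            push_cast
            ring
    calc Real.sqrt n / Real.pi * ‖∑ k ∈ Finset.range (2 * n),
          (((Real.pi / n : ℝ) : ℂ) * g (a (k+1)) - ∫ ω in a k..a (k+1), g ω)‖
        ≤ Real.sqrt n / Real.pi * (2 * n * (M * (Real.pi / n) * (Real.pi / n))) :=
          mul_le_mul_of_nonneg_left hsum_bound (by positivity)
      _ = 2 * Real.pi * M / Real.sqrt n := by
          field_simp
          linear_combination M * hss
  apply squeeze_zero_norm' (Filter.eventually_atTop.2 ⟨1, key⟩)
  have hs : Filter.Tendsto Real.sqrt Filter.atTop Filter.atTop := by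
    simpa only [← Real.sqrt_eq_rpow] using tendsto_rpow_atTop (by norm_num : (0:ℝ) < 1/2)
  have hsqrt : Filter.Tendsto (fun n : ℕ => Real.sqrt n) Filter.atTop Filter.atTop :=
    hs.comp tendsto_natCast_atTop_atTop
  exact Filter.Tendsto.div_atTop tendsto_const_nhds hsqrt
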